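/- Let x_1, ..., x_t be non-negative real numbers such that x_i ≤ 2·x_j for every i, j ∈ {1,...,t}, and let C = ∑ x_i. Then ∑ x_i² ≤ (9/8)·C²/t. -/
import Mathlib

theorem stmt0 (t : ℕ) (ht : 0 < t) (x : Fin t → ℝ)
    (hnn : ∀ i, 0 ≤ x i) (hbal : ∀ i j, x i ≤ 2 * x j)
    (C : ℝ) (hC : C = ∑ i, x i) :
    ∑ i, (x i) ^ 2 ≤ 9 / 8 * C ^ 2 / t := by
  have hne : (Finset.univ : Finset (Fin t)).Nonempty := by
    simpa [Finset.univ_nonempty_iff] using Fin.pos_iff_nonempty.mp ht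
  obtain ⟨i0, _, hmin⟩ := Finset.exists_min_image Finset.univ x hne
  set m := x i0 with hm
  have hterm : ∀ i, x i ^ 2 ≤ 3 * m * x i - 2 * m ^ 2 := by
    intro i
    have h1 : m ≤ x i := hmin i (Finset.mem_univ i)
    have h2 : x i ≤ 2 * m := hbal i i0
    nlinarith [mul_nonneg (sub_nonneg.2 h1) (sub_nonneg.2 h2)]
  have hsum : ∑ i, x i ^ 2 ≤ 3 * m * C - 2 * t * m ^ 2 := by
    calc ∑ i, x i ^ 2 ≤ ∑ i, (3 * m * x i - 2 * m ^ 2) :=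
          Finset.sum_le_sum fun i _ => hterm i
      _ = 3 * m * C - 2 * t * m ^ 2 := by
          rw [Finset.sum_sub_distrib, ← Finset.mul_sum, ← hC]
          simp [Finset.card_univ]
          ring
  have htpos : (0 : ℝ) < t := by exact_mod_cast ht
  rw [div_mul_eq_mul_div, le_div_iff₀ htpos]
  nlinarith [sq_nonneg (3 * C - 4 * t * m), hsum]
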